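/- The CBC mode of operation is topologically mixing: for any pair of nonempty open sets U, V ⊆ X, there exists an integer n₀ ∈ ℕ such that for all n > n₀, G_g^{∘n}(U) ∩ V ≠ ∅. -/

import Mathlib

open scoped BigOperators

/-- N-bit blocks: Boolean vectors of length N. -/
abbrev Block (N : ℕ) := Fin N → Bool

/-- Infinite sequences of N-bit blocks. -/
abbrev Msg (N : ℕ) := ℕ → Block N

/-- The phase space X = B^N × S_N. -/
abbrev Phase (N : ℕ) := Block N × Msg N

/-- Hamming distance d_e on B^N. -/
noncomputable def dE {N : ℕ} (x y : Block N) : ℝ :=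
  ∑ j : Fin N, if x j = y j then (0 : ℝ) else 1

/-- Distance d_m on message sequences. -/
noncomputable def dM {N : ℕ} (m m' : Msg N) : ℝ :=
  (9 / (N : ℝ)) * ∑' k : ℕ, (∑ i : Fin N, if m k i = m' k i then (0 : ℝ) else 1) / 10 ^ (k + 1)

/-- The distance d on the phase space X. -/
noncomputable def dX {N : ℕ} (P Q : Phase N) : ℝ :=
  dE P.1 Q.1 + dM P.2 Q.2

/-- The shift on message sequences. -/
def shiftMsg {N : ℕ} (m : Msg N) : Msg N := fun k => m (k + 1)

/-- The dynamical system G_g(x, m) = (g(m^0, x), σ(m)). -/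
def Gg {N : ℕ} (g : Block N → Block N → Block N) (P : Phase N) : Phase N :=
  (g (P.2 0) P.1, shiftMsg P.2)

/-- The CBC iterate function g(m, x) = E_k(x ⊕ m), with ⊕ the bitwise XOR. -/
def cbcG {N : ℕ} (Ek : Block N → Block N) (m x : Block N) : Block N :=
  Ek (fun j => Bool.xor (x j) (m j))

/-- Open sets for the topology induced by the distance d on X. -/
def IsOpenX {N : ℕ} (U : Set (Phase N)) : Prop :=
  ∀ P ∈ U, ∃ ε : ℝ, 0 < ε ∧ ∀ Q : Phase N, dX P Q < ε → Q ∈ U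

def st {N : ℕ} (Ek : Block N → Block N) (x : Block N) (m : Msg N) : ℕ → Block N
  | 0 => x
  | k + 1 => cbcG Ek (m k) (st Ek x m k)

lemma st_shift {N : ℕ} (Ek : Block N → Block N) (x : Block N) (m : Msg N) (n : ℕ) :
    st Ek (cbcG Ek (m 0) x) (shiftMsg m) n = st Ek x m (n + 1) := by
  induction n with
  | zero => rfl
  | succ n ih => simp [st, ih, shiftMsg]

lemma Gg_iter {N : ℕ} (Ek : Block N → Block N) (x : Block N) (m : Msg N) (n : ℕ) :
    (Gg (cbcG Ek))^[n] (x, m) = (st Ek x m n, fun k => m (k + n)) := by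
  induction n generalizing x m with
  | zero => simp [st]
  | succ n ih =>
    rw [Function.iterate_succ_apply]
    show (Gg (cbcG Ek))^[n] (cbcG Ek (m 0) x, shiftMsg m) = _
    rw [ih, st_shift]
    refine Prod.ext rfl ?_
    funext k
    simp [shiftMsg]
    ring_nf

lemma st_congr {N : ℕ} (Ek : Block N → Block N) (x : Block N) (m m' : Msg N) (n : ℕ)
    (h : ∀ k < n, m k = m' k) : st Ek x m n = st Ek x m' n := by
  induction n with
  | zero => rfl
  | succ n ih =>
    simp only [st, h n (Nat.lt_succ_self n),
      ih (fun k hk => h k (Nat.lt_succ_of_lt hk))]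

lemma dM_le {N : ℕ} (hN : 1 ≤ N) (m m' : Msg N) (t : ℕ)
    (h : ∀ k < t, m k = m' k) : dM m m' ≤ (1 / 10 : ℝ) ^ t := by
  have hN0 : (N : ℝ) ≠ 0 := by positivity
  set f : ℕ → ℝ := fun k => (∑ i : Fin N, if m k i = m' k i then (0 : ℝ) else 1) / 10 ^ (k + 1)
    with hf
  have hf0 : ∀ k, 0 ≤ f k := by
    intro k
    apply div_nonneg _ (by positivity)
    apply Finset.sum_nonneg
    intro i _
    split <;> norm_num
  have hfle : ∀ k, f k ≤ (N : ℝ) * (1 / 10) ^ (k + 1) := by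
    intro k
    have h1 : (∑ i : Fin N, if m k i = m' k i then (0 : ℝ) else 1) ≤ (N : ℝ) := by
      calc (∑ i : Fin N, if m k i = m' k i then (0 : ℝ) else 1)
          ≤ ∑ _i : Fin N, (1 : ℝ) := by
            apply Finset.sum_le_sum; intro i _; split <;> norm_num
        _ = (N : ℝ) := by simp
    have : f k ≤ (N : ℝ) / 10 ^ (k + 1) := by
      apply div_le_div_of_nonneg_right h1 (by positivity) |>.trans_eq rfl
    calc f k ≤ (N : ℝ) / 10 ^ (k + 1) := this
      _ = (N : ℝ) * (1 / 10) ^ (k + 1) := by rw [div_pow, one_pow, mul_one_div]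
  have hg : Summable (fun k : ℕ => (N : ℝ) * (1 / 10) ^ (k + 1)) := by
    apply Summable.mul_left
    exact (summable_geometric_of_lt_one (by norm_num) (by norm_num)).comp_injective
      (add_left_injective 1)
  have hfs : Summable f := Summable.of_nonneg_of_le hf0 hfle hg
  have hfz : ∀ k < t, f k = 0 := by
    intro k hk
    simp [hf, h k hk]
  have hsplit : ∑' k, f k = ∑' k, f (k + t) := by
    rw [← Summable.sum_add_tsum_nat_add t hfs]
    rw [Finset.sum_eq_zero (fun i hi => hfz i (Finset.mem_range.mp hi)), zero_add]
  have htail : ∑' k, f (k + t) ≤ ∑' k : ℕ, (N : ℝ) * (1 / 10) ^ (k + t + 1) := by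
    apply Summable.tsum_le_tsum (fun k => hfle (k + t)) (hfs.comp_injective (add_left_injective t))
    apply Summable.mul_left
    exact (summable_geometric_of_lt_one (by norm_num) (by norm_num)).comp_injective
      (fun a b hab => by simpa using hab)
  have hgeo : ∑' k : ℕ, (N : ℝ) * (1 / 10) ^ (k + t + 1) =
      (N : ℝ) * ((1 / 10) ^ (t + 1) * (10 / 9)) := by
    have : ∀ k : ℕ, (N : ℝ) * (1 / 10) ^ (k + t + 1)
        = ((N : ℝ) * (1 / 10) ^ (t + 1)) * (1 / 10) ^ k := by
      intro k; rw [show k + t + 1 = (t + 1) + k by ring, pow_add]; ring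
    rw [tsum_congr this, tsum_mul_left, tsum_geometric_of_lt_one (by norm_num) (by norm_num)]
    ring_nf
  have : dM m m' ≤ (9 / (N : ℝ)) * ((N : ℝ) * ((1 / 10) ^ (t + 1) * (10 / 9))) := by
    rw [dM]
    apply mul_le_mul_of_nonneg_left _ (by positivity)
    rw [hsplit] at *
    exact htail.trans_eq hgeo
  refine this.trans_eq ?_
  rw [pow_succ]
  field_simp
/-- the CBC mode of operation is topologically mixing. -/
theorem cbc_topologically_mixing
    {N : ℕ} (hN : 1 ≤ N) (Ek : Block N → Block N) (hEk : Function.Bijective Ek) :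
    ∀ U V : Set (Phase N), IsOpenX U → IsOpenX V → U.Nonempty → V.Nonempty →
      ∃ n₀ : ℕ, ∀ n : ℕ, n > n₀ → ((Gg (cbcG Ek))^[n] '' U ∩ V).Nonempty := by
  intro U V hU hV ⟨P, hP⟩ ⟨Q, hQ⟩
  obtain ⟨ε, hε, hUb⟩ := hU P hP
  obtain ⟨n₀, hn₀⟩ := exists_pow_lt_of_lt_one hε (by norm_num : (1 / 10 : ℝ) < 1)
  refine ⟨n₀, fun n hn => ?_⟩
  have hn1 : 1 ≤ n := le_trans (Nat.one_le_iff_ne_zero.mpr (by omega)) le_rfl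
  -- the state reached after n-1 steps from P
  set y : Block N := st Ek P.1 P.2 (n - 1) with hy
  obtain ⟨z, hz⟩ := hEk.2 Q.1
  -- the steering message
  set m' : Msg N := fun k =>
    if k < n - 1 then P.2 k
    else if k = n - 1 then (fun j => Bool.xor (z j) (y j))
    else Q.2 (k - n) with hm'
  have hagree : ∀ k < n - 1, P.2 k = m' k := by
    intro k hk; simp [hm', hk]
  -- R is in U
  have hRU : (P.1, m') ∈ U := by
    apply hUb
    have hdE : dE P.1 P.1 = 0 := by simp [dE]
    have hdM : dM P.2 m' ≤ (1 / 10 : ℝ) ^ (n - 1) := dM_le hN P.2 m' (n - 1) hagree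
    have hle : (1 / 10 : ℝ) ^ (n - 1) ≤ (1 / 10 : ℝ) ^ n₀ := by
      apply pow_le_pow_of_le_one (by norm_num) (by norm_num)
      omega
    calc dX P (P.1, m') = 0 + dM P.2 m' := by rw [dX, hdE]
      _ = dM P.2 m' := by ring
      _ ≤ (1 / 10 : ℝ) ^ (n - 1) := hdM
      _ ≤ (1 / 10 : ℝ) ^ n₀ := hle
      _ < ε := hn₀
  -- the iterate lands exactly on Q
  have hiter : (Gg (cbcG Ek))^[n] (P.1, m') = Q := by
    rw [Gg_iter]
    have h1 : st Ek P.1 m' n = Q.1 := by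
      have hn' : n - 1 + 1 = n := by omega
      rw [← hn']
      show cbcG Ek (m' (n - 1)) (st Ek P.1 m' (n - 1)) = Q.1
      have hst : st Ek P.1 m' (n - 1) = y := by
        rw [hy]
        exact st_congr Ek P.1 m' P.2 (n - 1) (fun k hk => (hagree k hk).symm)
      have hmp : m' (n - 1) = fun j => Bool.xor (z j) (y j) := by
        simp [hm']
      rw [hst, hmp]
      show Ek (fun j => Bool.xor (y j) (Bool.xor (z j) (y j))) = Q.1
      rw [← hz]
      exact congrArg Ek (funext fun j => by cases y j <;> cases z j <;> rfl)
    have h2 : (fun k => m' (k + n)) = Q.2 := by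
      funext k
      have h3 : ¬ (k + n < n - 1) := by omega
      have h4 : ¬ (k + n = n - 1) := by omega
      simp only [hm', h3, h4, if_false]
      have h5 : k + n - n = k := by omega
      rw [h5]
    rw [h1, h2]
  exact ⟨Q, ⟨(P.1, m'), hRU, hiter⟩, hQ⟩
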